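/- Let ρ ∈ (0,1), φ(y) = (1-ρ)y/(1-ρy), and a_k(y) = (1-ρ)^k + y(1-(1-ρ)^k) for k ≥ -1 and y ∈ (0,1). Then for every k ≥ 0 and y ∈ (0,1): (1-ρ)/((1-ρφ^(-k)(y))(1-ρ+ρφ^(-k)(y))) = a_k(y)²/(a_{k+1}(y)·a_{k-1}(y)), where φ^(-k) denotes the k-fold inverse iterate φ^(-k)(y) = y/((1-ρ)^k + y(1-(1-ρ)^k)); consequently the telescoping product ∏_{k=0}^{n} (1-ρ)/((1-ρφ^(-k)(y))(1-ρ+ρφ^(-k)(y))) = (a₀(y)/a₋₁(y))·(a_n(y)/a_{n+1}(y)). -/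

import Mathlib

theorem telescoping_product (ρ : ℝ) (hρ : ρ ∈ Set.Ioo (0:ℝ) 1)
    (a : ℤ → ℝ → ℝ) (ha : ∀ k y, a k y = (1 - ρ) ^ k + y * (1 - (1 - ρ) ^ k))
    (ψ : ℕ → ℝ → ℝ)
    (hψ : ∀ k y, ψ k y = y / ((1 - ρ) ^ k + y * (1 - (1 - ρ) ^ k))) :
    (∀ k : ℕ, ∀ y ∈ Set.Ioo (0:ℝ) 1,
      (1 - ρ) / ((1 - ρ * ψ k y) * (1 - ρ + ρ * ψ k y))
        = (a k y) ^ 2 / (a (k + 1) y * a ((k : ℤ) - 1) y)) ∧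
    (∀ n : ℕ, ∀ y ∈ Set.Ioo (0:ℝ) 1,
      (∏ k ∈ Finset.range (n + 1),
        (1 - ρ) / ((1 - ρ * ψ k y) * (1 - ρ + ρ * ψ k y)))
        = (a 0 y / a (-1) y) * (a n y / a (n + 1) y)) := by
  obtain ⟨hρ0, hρ1⟩ := hρ
  have ht : (0:ℝ) < 1 - ρ := by linarith
  have hapos : ∀ (k : ℤ), ∀ y ∈ Set.Ioo (0:ℝ) 1, 0 < a k y := by
    intro k y hy
    obtain ⟨hy0, hy1⟩ := hy
    have hT : 0 < (1 - ρ) ^ k := zpow_pos ht k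
    rw [ha]
    nlinarith
  have hfac : ∀ k : ℕ, ∀ y ∈ Set.Ioo (0:ℝ) 1,
      (1 - ρ) / ((1 - ρ * ψ k y) * (1 - ρ + ρ * ψ k y))
        = (a k y) ^ 2 / (a (k + 1) y * a ((k : ℤ) - 1) y) := by
    intro k y hy
    obtain ⟨hy0, hy1⟩ := hy
    have hT : 0 < (1 - ρ) ^ k := pow_pos ht k
    have hz1 : (1 - ρ) ^ ((k : ℤ)) = (1 - ρ) ^ k := zpow_natCast _ _
    have hz2 : (1 - ρ) ^ ((k : ℤ) + 1) = (1 - ρ) ^ k * (1 - ρ) := by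
      rw [zpow_add_one₀ ht.ne', zpow_natCast]
    have hz3 : (1 - ρ) ^ ((k : ℤ) - 1) = (1 - ρ) ^ k / (1 - ρ) := by
      rw [zpow_sub_one₀ ht.ne', zpow_natCast]
      ring
    set T := (1 - ρ) ^ k with hTdef
    have hA : 0 < T + y * (1 - T) := by nlinarith
    have h1 : (0:ℝ) < T * (1 - y) + y * (1 - ρ) := by nlinarith
    have h2 : (0:ℝ) < (1 - ρ) * (T + y * (1 - T)) + ρ * y := by nlinarith
    have e1 : 1 - ρ * ψ k y = (T * (1 - y) + y * (1 - ρ)) / (T + y * (1 - T)) := by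
      rw [hψ, ← hTdef]
      field_simp
      ring
    have e2 : 1 - ρ + ρ * ψ k y
        = ((1 - ρ) * (T + y * (1 - T)) + ρ * y) / (T + y * (1 - T)) := by
      rw [hψ, ← hTdef]
      field_simp
    have e3 : a ((k:ℤ) - 1) y = (T * (1 - y) + y * (1 - ρ)) / (1 - ρ) := by
      rw [ha, hz3]
      field_simp
      ring
    have e4 : a ((k:ℤ) + 1) y = (1 - ρ) * (T + y * (1 - T)) + ρ * y := by
      rw [ha, hz2]
      ring
    have e0 : a (k : ℤ) y = T + y * (1 - T) := by rw [ha, hz1]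
    rw [e1, e2, e0, e4, e3]
    rw [div_mul_div_comm, div_div_eq_mul_div, mul_div_assoc', div_div_eq_mul_div]
    rw [div_eq_div_iff (by positivity) (by positivity)]
    ring
  refine ⟨hfac, ?_⟩
  intro n y hy
  induction n with
  | zero =>
      rw [Finset.prod_range_one, hfac 0 y hy]
      have h0 := (hapos 0 y hy).ne'
      have h1 := (hapos 1 y hy).ne'
      have hm1 := (hapos (-1) y hy).ne'
      norm_num
      field_simp
  | succ n ih =>
      rw [Finset.prod_range_succ, ih, hfac (n + 1) y hy]
      have h0 := (hapos 0 y hy).ne'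
      have hm1 := (hapos (-1) y hy).ne'
      have hn := (hapos n y hy).ne'
      have hn1 := (hapos ((n : ℤ) + 1) y hy).ne'
      have hn2 := (hapos ((n : ℤ) + 2) y hy).ne'
      push_cast
      have e1 : ((n : ℤ) + 1 + 1) = (n : ℤ) + 2 := by ring
      have e2 : ((n : ℤ) + 1 - 1) = (n : ℤ) := by ring
      rw [e1, e2]
      field_simp
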